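/- The biHecke monoid is acyclic: for any f in the biHecke monoid M(W) of a finite Coxeter group W, there exists k > 0 such that f^{k+1} = f^k. In particular, f^k is idempotent. -/

import Mathlib

open scoped Classical

noncomputable section

variable {B W : Type*} [Group W] {M : CoxeterMatrix B}

/-- The elementary bubble antisorting operator `π_i` on a Coxeter group:
`w·π_i = w` if `i` is a right descent of `w`, and `w·π_i = w s_i` otherwise. -/
noncomputable def piOp (cs : CoxeterSystem M W) (i : B) : W → W :=
  fun w => if cs.IsRightDescent w i then w else w * cs.simple i

/-- The elementary bubble sorting operator `π̄_i` on a Coxeter group: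
`w·π̄_i = w s_i` if `i` is a right descent of `w`, and `w·π̄_i = w` otherwise. -/
noncomputable def pibOp (cs : CoxeterSystem M W) (i : B) : W → W :=
  fun w => if cs.IsRightDescent w i then w * cs.simple i else w

/-- The biHecke monoid: the submonoid of `Function.End W` generated by the antisorting
operators `π_i` and the sorting operators `π̄_i`. -/
noncomputable def biHecke (cs : CoxeterSystem M W) : Submonoid (Function.End W) :=
  Submonoid.closure ({f | ∃ i, f = piOp cs i} ∪ {f | ∃ i, f = pibOp cs i})

/-- Left weak order: `u ≤_L v` iff `ℓ(v u⁻¹) + ℓ(u) = ℓ(v)`. -/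
noncomputable def leL (cs : CoxeterSystem M W) (u v : W) : Prop :=
  cs.length (v * u⁻¹) + cs.length u = cs.length v

/-- Right weak order: `u ≤_R v` iff `ℓ(u) + ℓ(u⁻¹ v) = ℓ(v)`. -/
noncomputable def leR (cs : CoxeterSystem M W) (u v : W) : Prop :=
  cs.length u + cs.length (u⁻¹ * v) = cs.length v

/-- Bruhat order: `u ≤_B v` iff some reduced word of `v` has a subword with product `u`. -/
noncomputable def leB (cs : CoxeterSystem M W) (u v : W) : Prop :=
  ∃ l : List B, cs.IsReduced l ∧ cs.wordProd l = v ∧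
    ∃ l' : List B, l'.Sublist l ∧ cs.wordProd l' = u

/-- Right action of a word of operators: apply the operators from left to right. -/
noncomputable def actWord (ops : B → W → W) (l : List B) (w : W) : W :=
  l.foldl (fun x i => ops i x) w

/-- The function `e_w = π_{w⁻¹ w₀} π̄_{w₀ w}` (given reduced words `l1` for `w⁻¹ w₀` and
`l2` for `w₀ w`), acting on the right. -/
noncomputable def eIdem (cs : CoxeterSystem M W) (l1 l2 : List B) : W → W :=
  fun x => actWord (pibOp cs) l2 (actWord (piOp cs) l1 x)

/-- The parabolic subgroup `W_K`. -/
noncomputable def parab (cs : CoxeterSystem M W) (K : Set B) : Subgroup W :=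
  Subgroup.closure (cs.simple '' K)

/-- `K` is a right block of `w` if `w W_K = W_J w` for some `J`. -/
noncomputable def isRightBlock (cs : CoxeterSystem M W) (w : W) (K : Set B) : Prop :=
  ∃ J : Set B, (fun x => w * x) '' (parab cs K : Set W) = (fun x => x * w) '' (parab cs J : Set W)

/-- `J` is a left block of `w` if `w W_K = W_J w` for some `K`. -/
noncomputable def isLeftBlock (cs : CoxeterSystem M W) (w : W) (J : Set B) : Prop :=
  ∃ K : Set B, (fun x => w * x) '' (parab cs K : Set W) = (fun x => x * w) '' (parab cs J : Set W)

/-- The cutting relation: `v ⊑ w` iff `v = w^K` for some right block `K` of `w`, i.e.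
`w = v · u` with `u ∈ W_K` and `v` has no right descents in `K`. -/
noncomputable def cuts (cs : CoxeterSystem M W) (v w : W) : Prop :=
  ∃ K J : Set B,
    ((fun x => w * x) '' (parab cs K : Set W) = (fun x => x * w) '' (parab cs J : Set W)) ∧
    ∃ u ∈ parab cs K, w = v * u ∧ ∀ k ∈ K, ¬ cs.IsRightDescent v k

/-- Covering relation of left weak order. -/
noncomputable def covL (cs : CoxeterSystem M W) (x y : W) : Prop :=
  leL cs x y ∧ x ≠ y ∧ ∀ z, leL cs x z → leL cs z y → z = x ∨ z = y

end

namespace BiHeckeAux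

open CoxeterSystem List Finset
open scoped Classical

variable {B W : Type*} [Group W] {M : CoxeterMatrix B} (cs : CoxeterSystem M W)

local prefix:100 "s" => cs.simple
local prefix:100 "π" => cs.wordProd

lemma conj_eq_iff {G : Type*} [Group G] (a x t : G) : a * t * a⁻¹ = x ↔ t = a⁻¹ * x * a := by
  constructor
  · rintro rfl; group
  · rintro rfl; group

lemma conj_conj_simple (i : B) (t : W) : s i * (s i * t * s i) * s i = t := by
  calc s i * (s i * t * s i) * s i = (s i * s i) * t * (s i * s i) := by group
  _ = t := by rw [cs.simple_mul_simple_self]; group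

lemma conj_simple_eq_iff (i : B) (t x : W) : s i * t * s i = x ↔ t = s i * x * s i := by
  constructor
  · rintro rfl; rw [conj_conj_simple]
  · rintro rfl; rw [conj_conj_simple]

lemma simple_mul_eq_iff (i : B) (t x : W) : s i * t = x ↔ t = s i * x := by
  constructor
  · rintro rfl; rw [cs.simple_mul_simple_cancel_left]
  · rintro rfl; rw [cs.simple_mul_simple_cancel_left]

/-- The sign-flipping map underlying the reflection representation on `W × ℤˣ`. -/
noncomputable def sigmaFun (i : B) : W × ℤˣ → W × ℤˣ :=
  fun x => (s i * x.1 * s i, if x.1 = s i then -x.2 else x.2)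

lemma conj_simple_eq_simple_iff (i : B) (t : W) : (s i * t * s i = s i) ↔ (t = s i) := by
  rw [conj_simple_eq_iff, cs.simple_mul_simple_self, one_mul]

lemma sigmaFun_involutive (i : B) : Function.Involutive (sigmaFun cs i) := by
  rintro ⟨t, ε⟩
  simp only [sigmaFun, conj_simple_eq_simple_iff]
  by_cases ht : t = s i
  · simp [ht, conj_conj_simple]
  · simp [ht, conj_conj_simple]

/-- The permutation of `W × ℤˣ` attached to a simple reflection. -/
noncomputable def sigma (i : B) : Equiv.Perm (W × ℤˣ) := (sigmaFun_involutive cs i).toPerm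

lemma sigma_apply (i : B) (x : W × ℤˣ) : sigma cs i x =
    (s i * x.1 * s i, if x.1 = s i then -x.2 else x.2) := rfl

section Braid

variable (i j : B)

/-- The sign of a one-step application of `sigma i * sigma j`. -/
noncomputable def mu (t : W) : ℤˣ :=
  (if t = s j then -1 else 1) * (if t = s j * s i * s j then -1 else 1)

lemma simple_mul_pow (a : ℕ) :
    s j * (s i * s j) ^ a = ((s i * s j) ^ a)⁻¹ * s j := by
  have hsemi : SemiconjBy (s j) (s i * s j) (s i * s j)⁻¹ := by
    show s j * (s i * s j) = (s i * s j)⁻¹ * s j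
    rw [mul_inv_rev, cs.inv_simple, cs.inv_simple]
    group
  have h := (hsemi.pow_right a).eq
  rw [inv_pow] at h
  exact h

lemma inv_pow_mul_simple (a : ℕ) :
    ((s i * s j) ^ a)⁻¹ * s j = s j * (s i * s j) ^ a :=
  (simple_mul_pow cs i j a).symm

lemma conj_pow_eq_sj_iff (t : W) (l : ℕ) :
    (s i * s j) ^ l * t * ((s i * s j) ^ l)⁻¹ = s j ↔ s j * t = (s i * s j) ^ (2 * l) := by
  rw [conj_eq_iff]
  rw [inv_pow_mul_simple, mul_assoc, ← pow_add]
  rw [← simple_mul_eq_iff]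
  rw [two_mul]

lemma conj_pow_eq_sjsisj_iff (t : W) (l : ℕ) :
    (s i * s j) ^ l * t * ((s i * s j) ^ l)⁻¹ = s j * s i * s j ↔
      s j * t = (s i * s j) ^ (2 * l + 1) := by
  rw [conj_eq_iff]
  have key : ((s i * s j) ^ l)⁻¹ * (s j * s i * s j) * (s i * s j) ^ l
      = s j * (s i * s j) ^ (2 * l + 1) := by
    calc ((s i * s j) ^ l)⁻¹ * (s j * s i * s j) * (s i * s j) ^ l
        = (((s i * s j) ^ l)⁻¹ * s j) * ((s i * s j) * (s i * s j) ^ l) := by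
          simp only [mul_assoc]
      _ = (s j * (s i * s j) ^ l) * ((s i * s j) ^ (l + 1)) := by
          rw [inv_pow_mul_simple, ← pow_succ']
      _ = s j * (s i * s j) ^ (2 * l + 1) := by
          rw [mul_assoc, ← pow_add]
          congr 2
          omega
  rw [key, ← simple_mul_eq_iff]

lemma rho_apply (t : W) (ε : ℤˣ) :
    (sigma cs i * sigma cs j) (t, ε) =
      ((s i * s j) * t * (s i * s j)⁻¹, ε * mu cs i j t) := by
  have happ : (sigma cs i * sigma cs j) (t, ε) = sigma cs i (sigma cs j (t, ε)) := rfl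
  rw [happ, sigma_apply, sigma_apply]
  simp only [mu]
  have hpos : s i * (s j * t * s j) * s i = (s i * s j) * t * (s i * s j)⁻¹ := by
    rw [mul_inv_rev, cs.inv_simple, cs.inv_simple]; group
  have hcond : (s j * t * s j = s i) ↔ (t = s j * s i * s j) := by
    rw [conj_simple_eq_iff]
  apply Prod.ext
  · simpa using hpos
  · simp only [hcond]
    split_ifs <;> simp [neg_neg, mul_neg, neg_mul, one_mul, mul_one]

lemma conj_pow_step {G : Type*} [Group G] (p t : G) (k : ℕ) :
    p ^ k * (p * t * p⁻¹) * (p ^ k)⁻¹ = p ^ (k + 1) * t * (p ^ (k + 1))⁻¹ := by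
  rw [pow_succ']
  group

lemma rho_pow_apply (k : ℕ) (t : W) (ε : ℤˣ) :
    ((sigma cs i * sigma cs j) ^ k) (t, ε) =
      ((s i * s j) ^ k * t * ((s i * s j) ^ k)⁻¹,
        ε * ∏ l ∈ Finset.range k, mu cs i j ((s i * s j) ^ l * t * ((s i * s j) ^ l)⁻¹)) := by
  induction k generalizing t ε with
  | zero => simp
  | succ k ih =>
    have hsplit : ((sigma cs i * sigma cs j) ^ (k + 1)) (t, ε)
        = ((sigma cs i * sigma cs j) ^ k) ((sigma cs i * sigma cs j) (t, ε)) := by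
      rw [pow_succ]
      rfl
    rw [hsplit, rho_apply, ih]
    apply Prod.ext
    · simp only
      exact conj_pow_step _ _ _
    · simp only
      rw [Finset.prod_range_succ']
      have hterm : ∀ l : ℕ,
          (s i * s j) ^ l * ((s i * s j) * t * (s i * s j)⁻¹) * ((s i * s j) ^ l)⁻¹
            = (s i * s j) ^ (l + 1) * t * ((s i * s j) ^ (l + 1))⁻¹ :=
        fun l => conj_pow_step _ _ _
      have hcongr : ∏ l ∈ Finset.range k,
          mu cs i j ((s i * s j) ^ l * ((s i * s j) * t * (s i * s j)⁻¹) * ((s i * s j) ^ l)⁻¹)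
          = ∏ l ∈ Finset.range k,
              mu cs i j ((s i * s j) ^ (l + 1) * t * ((s i * s j) ^ (l + 1))⁻¹) :=
        Finset.prod_congr rfl fun l _ => by rw [hterm l]
      rw [hcongr]
      simp only [pow_zero, one_mul, inv_one, mul_one]
      rw [mul_assoc, mul_comm (mu cs i j t)]

lemma braid_sigma : ((sigma cs i * sigma cs j) ^ M.M i j) = 1 := by
  apply Equiv.ext
  rintro ⟨t, ε⟩
  rw [rho_pow_apply]
  have hpm : (s i * s j) ^ M.M i j = 1 := cs.simple_mul_simple_pow i j
  have hsign : (∏ l ∈ Finset.range (M.M i j),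
      mu cs i j ((s i * s j) ^ l * t * ((s i * s j) ^ l)⁻¹)) = 1 := by
    set G : ℕ → ℤˣ := fun a => if s j * t = (s i * s j) ^ a then -1 else 1 with hG
    have hfac : ∀ l : ℕ, mu cs i j ((s i * s j) ^ l * t * ((s i * s j) ^ l)⁻¹)
        = G (2 * l) * G (2 * l + 1) := by
      intro l
      unfold mu
      rw [hG]
      simp only
      congr 1
      · exact if_congr (conj_pow_eq_sj_iff cs i j t l) rfl rfl
      · exact if_congr (conj_pow_eq_sjsisj_iff cs i j t l) rfl rfl
    have hpair : ∀ n : ℕ, (∏ l ∈ Finset.range n, (G (2 * l) * G (2 * l + 1)))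
        = ∏ a ∈ Finset.range (2 * n), G a := by
      intro n
      induction n with
      | zero => simp
      | succ n ih =>
        rw [Finset.prod_range_succ, ih]
        have h2 : 2 * (n + 1) = (2 * n + 1) + 1 := by ring
        rw [h2, Finset.prod_range_succ, Finset.prod_range_succ, mul_assoc]
    calc (∏ l ∈ Finset.range (M.M i j),
          mu cs i j ((s i * s j) ^ l * t * ((s i * s j) ^ l)⁻¹))
        = ∏ l ∈ Finset.range (M.M i j), (G (2 * l) * G (2 * l + 1)) :=
          Finset.prod_congr rfl fun l _ => hfac l
      _ = ∏ a ∈ Finset.range (2 * M.M i j), G a := hpair _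
      _ = (∏ a ∈ Finset.range (M.M i j), G a) * ∏ a ∈ Finset.range (M.M i j), G (M.M i j + a) := by
          rw [two_mul, Finset.prod_range_add]
      _ = (∏ a ∈ Finset.range (M.M i j), G a) * ∏ a ∈ Finset.range (M.M i j), G a := by
          congr 1
          exact Finset.prod_congr rfl fun a _ => by simp [hG, pow_add, hpm]
      _ = 1 := by
          rw [← sq]
          exact Int.units_sq _
  rw [hpm, hsign]
  simp

end Braid

local prefix:100 "ris" => cs.rightInvSeq
local prefix:100 "ℓ" => cs.length

/-- The reflection representation of the Coxeter group on `W × ℤˣ`. -/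
noncomputable def phi : W →* Equiv.Perm (W × ℤˣ) :=
  cs.lift ⟨fun i => sigma cs i, fun i i' => braid_sigma cs i i'⟩

lemma phi_simple (i : B) : phi cs (s i) = sigma cs i :=
  cs.lift_apply_simple _ i

/-- The sign of `t` with respect to the right inversion sequence of `ω`. -/
noncomputable def sgn (t : W) (ω : List B) : ℤˣ :=
  ((ris ω).map fun r => if t = r then (-1 : ℤˣ) else 1).prod

lemma sgn_nil (t : W) : sgn cs t [] = 1 := rfl

lemma ris_cons (k : B) (ω : List B) :
    ris (k :: ω) = ((π ω)⁻¹ * s k * π ω) :: ris ω := rfl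

lemma sgn_cons (t : W) (k : B) (ω : List B) :
    sgn cs t (k :: ω) = (if t = (π ω)⁻¹ * s k * π ω then (-1 : ℤˣ) else 1) * sgn cs t ω := by
  rw [sgn, ris_cons, List.map_cons, List.prod_cons, sgn]

lemma phi_wordProd (ω : List B) (t : W) (ε : ℤˣ) :
    phi cs (π ω) (t, ε) = ((π ω) * t * (π ω)⁻¹, ε * sgn cs t ω) := by
  induction ω with
  | nil =>
    simp [sgn_nil, wordProd_nil]
  | cons k ω ih =>
    rw [wordProd_cons, map_mul, Equiv.Perm.mul_apply, ih, phi_simple, sigma_apply]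
    simp only
    have hcond : (π ω * t * (π ω)⁻¹ = s k) ↔ (t = (π ω)⁻¹ * s k * (π ω)) :=
      conj_eq_iff _ _ _
    apply Prod.ext
    · simp only
      rw [mul_inv_rev, cs.inv_simple]
      group
    · simp only [hcond, sgn_cons]
      split_ifs <;> simp <;> ring

lemma sgn_eq_of_wordProd_eq (ω ω' : List B) (h : π ω = π ω') (t : W) :
    sgn cs t ω = sgn cs t ω' := by
  have h1 := phi_wordProd cs ω t 1
  have h2 := phi_wordProd cs ω' t 1
  rw [h] at h1
  rw [h1] at h2
  have := congrArg Prod.snd h2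
  simpa using this

lemma mem_ris_of_sgn_ne_one (t : W) (ω : List B) (h : sgn cs t ω ≠ 1) : t ∈ ris ω := by
  by_contra hmem
  apply h
  rw [sgn]
  apply List.prod_eq_one
  intro x hx
  rw [List.mem_map] at hx
  obtain ⟨r, hr, rfl⟩ := hx
  rw [if_neg]
  rintro rfl
  exact hmem hr

/-- The exchange property for simple reflections. -/
theorem exists_eraseIdx_of_rightDescent (ω : List B) (hred : cs.IsReduced ω) (i : B)
    (hd : cs.IsRightDescent (π ω) i) :
    ∃ j, j < ω.length ∧ π (ω.eraseIdx j) = π ω * s i := by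
  obtain ⟨α, hα_len, hα⟩ := cs.exists_reduced_word (π ω * s i)
  have hαred : cs.IsReduced α := by
    show ℓ (π α) = α.length
    exact hα_len
  have hprod : π (α.concat i) = π ω := by
    rw [wordProd_concat, ← hα, cs.simple_mul_simple_cancel_right]
  -- `s i` is not in the right inversion sequence of `α`
  have hnotmem : s i ∉ ris α := by
    intro hmem
    have hinv := cs.isRightInversion_of_mem_rightInvSeq hαred hmem
    rw [cs.isRightInversion_simple_iff_isRightDescent] at hinv
    have h1 : ℓ (π α * s i) < ℓ (π α) := hinv
    rw [← hα, cs.simple_mul_simple_cancel_right] at h1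
    have h2 : ℓ (π ω * s i) < ℓ (π ω) := hd
    omega
  -- the sign of `s i` in `α.concat i` is `-1`
  have hsgn_concat : sgn cs (s i) (α.concat i) = -1 := by
    rw [sgn, cs.rightInvSeq_concat, List.concat_eq_append, List.map_append, List.prod_append]
    have h1 : (((ris α).map (MulAut.conj (s i))).map
        fun r => if s i = r then (-1 : ℤˣ) else 1).prod = 1 := by
      apply List.prod_eq_one
      intro x hx
      rw [List.mem_map] at hx
      obtain ⟨r, hr, rfl⟩ := hx
      rw [List.mem_map] at hr
      obtain ⟨r', hr', rfl⟩ := hr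
      rw [if_neg]
      intro hcontra
      have hrefl : (MulAut.conj (s i)) r' = s i * r' * s i := by
        rw [MulAut.conj_apply, cs.inv_simple]
      rw [hrefl, eq_comm, conj_simple_eq_iff, cs.simple_mul_simple_self, one_mul] at hcontra
      rw [← hcontra] at hnotmem
      exact hnotmem hr'
    rw [h1, one_mul]
    simp
  -- hence the sign of `s i` in `ω` is `-1`, so `s i` is in the inversion sequence of `ω`
  have hsgn : sgn cs (s i) ω = -1 := by
    rw [sgn_eq_of_wordProd_eq cs ω (α.concat i) hprod.symm, hsgn_concat]
  have hmem : s i ∈ ris ω := by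
    apply mem_ris_of_sgn_ne_one cs _ _
    rw [hsgn]
    decide
  obtain ⟨j, hj, hget⟩ := List.getElem_of_mem hmem
  have hj' : j < ω.length := by
    have := cs.length_rightInvSeq ω
    omega
  refine ⟨j, hj', ?_⟩
  have hD := cs.wordProd_mul_getD_rightInvSeq ω j
  rw [List.getD_eq_getElem _ _ hj, hget] at hD
  exact hD.symm

/-! ### Weak order lemmas -/

lemma leL_one (w : W) : leL cs 1 w := by
  simp [leL]

lemma leL.length_le {u v : W} (h : leL cs u v) : ℓ u ≤ ℓ v := by
  unfold leL at h
  omega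

lemma descent_mono {u v : W} {i : B} (h : leL cs u v) (hd : cs.IsRightDescent u i) :
    cs.IsRightDescent v i := by
  have h1 : ℓ (u * s i) + 1 = ℓ u := cs.isRightDescent_iff.mp hd
  have h2 : ℓ (v * s i) ≤ ℓ (v * u⁻¹) + ℓ (u * s i) := by
    have hexp : v * s i = (v * u⁻¹) * (u * s i) := by group
    rw [hexp]
    exact cs.length_mul_le _ _
  show ℓ (v * s i) < ℓ v
  unfold leL at h
  omega

lemma star {u v : W} {i : B} (h : leL cs u v) (hv : cs.IsRightDescent v i)
    (hu : ¬ cs.IsRightDescent u i) : ℓ (v * s i * u⁻¹) + 1 = ℓ (v * u⁻¹) := by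
  obtain ⟨a, ha_len, ha⟩ := cs.exists_reduced_word (v * u⁻¹)
  obtain ⟨b, hb_len, hb⟩ := cs.exists_reduced_word u
  have ha_len : a.length = ℓ (v * u⁻¹) := by rw [ha]; exact (ha_len : ℓ (π a) = a.length).symm
  have hb_len : b.length = ℓ u := by rw [hb]; exact (hb_len : ℓ (π b) = b.length).symm
  have hab : π (a ++ b) = v := by
    rw [wordProd_append, ← ha, ← hb]
    group
  have hleL := h
  unfold leL at hleL
  have habred : cs.IsReduced (a ++ b) := by
    show ℓ (π (a ++ b)) = (a ++ b).length
    rw [hab, List.length_append]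
    omega
  have hd : cs.IsRightDescent (π (a ++ b)) i := by rw [hab]; exact hv
  obtain ⟨j, hj, hjprod⟩ := exists_eraseIdx_of_rightDescent cs (a ++ b) habred i hd
  rw [hab] at hjprod
  have hvs : ℓ (v * s i) + 1 = ℓ v := cs.isRightDescent_iff.mp hv
  by_cases hcase : j < a.length
  · -- the erased letter is in the `a` part
    rw [List.eraseIdx_append_of_lt_length hcase] at hjprod
    have hsplit : π (a.eraseIdx j) * u = v * s i := by
      rw [← hjprod, wordProd_append, ← hb]
    have heq : π (a.eraseIdx j) = v * s i * u⁻¹ := by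
      rw [← hsplit]; group
    have hlen1 : (a.eraseIdx j).length + 1 = a.length := List.length_eraseIdx_add_one hcase
    have hup : ℓ (v * s i * u⁻¹) + 1 ≤ a.length := by
      rw [← heq]
      have := cs.length_wordProd_le (a.eraseIdx j)
      omega
    have hlow : ℓ (v * s i) ≤ ℓ (v * s i * u⁻¹) + ℓ u := by
      have hexp : v * s i = (v * s i * u⁻¹) * u := by group
      calc ℓ (v * s i) = ℓ ((v * s i * u⁻¹) * u) := by rw [← hexp]
        _ ≤ ℓ (v * s i * u⁻¹) + ℓ u := cs.length_mul_le _ _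
    omega
  · -- the erased letter is in the `b` part: contradiction
    push_neg at hcase
    rw [List.eraseIdx_append_of_length_le hcase] at hjprod
    have hsplit : π a * π (b.eraseIdx (j - a.length)) = v * s i := by
      rw [← hjprod, wordProd_append]
    have heq : π (b.eraseIdx (j - a.length)) = u * s i := by
      have h2 : π (b.eraseIdx (j - a.length)) = (π a)⁻¹ * (v * s i) := by
        rw [← hsplit]; group
      rw [h2, ← ha]
      group
    have hjb : j - a.length < b.length := by
      rw [List.length_append] at hj
      omega
    have hlen1 : (b.eraseIdx (j - a.length)).length + 1 = b.length :=
      List.length_eraseIdx_add_one hjb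
    have hup : ℓ (u * s i) + 1 ≤ b.length := by
      rw [← heq]
      have := cs.length_wordProd_le (b.eraseIdx (j - a.length))
      omega
    have hus : ℓ (u * s i) = ℓ u + 1 := cs.not_isRightDescent_iff.mp hu
    omega

/-! ### The monotonicity property of biHecke monoid elements -/

/-- `f` interacts well with the left weak order: it is monotone, and applying it to a
pair `u ≤L v` either preserves the "ratio" `v * u⁻¹` exactly or strictly shrinks it. -/
def Good (f : Function.End W) : Prop :=
  ∀ u v : W, leL cs u v → leL cs (f u) (f v) ∧
    ((f v) * (f u)⁻¹ = v * u⁻¹ ∨ ℓ ((f v) * (f u)⁻¹) < ℓ (v * u⁻¹))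

lemma good_one : Good cs (1 : Function.End W) := by
  intro u v h
  exact ⟨h, Or.inl rfl⟩

lemma good_mul {f g : Function.End W} (hf : Good cs f) (hg : Good cs g) :
    Good cs (f * g) := by
  intro u v h
  obtain ⟨h1, h2⟩ := hg u v h
  obtain ⟨h3, h4⟩ := hf (g u) (g v) h1
  have happ1 : (f * g) u = f (g u) := rfl
  have happ2 : (f * g) v = f (g v) := rfl
  rw [happ1, happ2]
  refine ⟨h3, ?_⟩
  rcases h2 with h2 | h2
  · rcases h4 with h4 | h4
    · exact Or.inl (by rw [h4, h2])
    · exact Or.inr (by rw [← h2]; exact h4)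
  · rcases h4 with h4 | h4
    · exact Or.inr (by rw [h4]; exact h2)
    · exact Or.inr (lt_trans h4 h2)

lemma good_piOp (i : B) : Good cs (piOp cs i) := by
  intro u v h
  have hleL := h
  unfold leL at hleL
  by_cases hdu : cs.IsRightDescent u i
  · have hdv : cs.IsRightDescent v i := descent_mono cs h hdu
    have h1 : piOp cs i u = u := by simp [piOp, hdu]
    have h2 : piOp cs i v = v := by simp [piOp, hdv]
    rw [h1, h2]
    exact ⟨h, Or.inl rfl⟩
  · have h1 : piOp cs i u = u * s i := by simp [piOp, hdu]
    have hus : ℓ (u * s i) = ℓ u + 1 := cs.not_isRightDescent_iff.mp hdu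
    by_cases hdv : cs.IsRightDescent v i
    · -- u moves up, v stays
      have h2 : piOp cs i v = v := by simp [piOp, hdv]
      rw [h1, h2]
      have hstar := star cs h hdv hdu
      have hratio : v * (u * s i)⁻¹ = v * s i * u⁻¹ := by
        rw [mul_inv_rev, cs.inv_simple]
        group
      constructor
      · show ℓ (v * (u * s i)⁻¹) + ℓ (u * s i) = ℓ v
        rw [hratio, hus]
        omega
      · right
        rw [hratio]
        omega
    · -- both move up
      have h2 : piOp cs i v = v * s i := by simp [piOp, hdv]
      rw [h1, h2]
      have hvs : ℓ (v * s i) = ℓ v + 1 := cs.not_isRightDescent_iff.mp hdv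
      have hratio : (v * s i) * (u * s i)⁻¹ = v * u⁻¹ := by
        rw [mul_inv_rev, cs.inv_simple, ← mul_assoc, cs.simple_mul_simple_cancel_right]
      constructor
      · show ℓ ((v * s i) * (u * s i)⁻¹) + ℓ (u * s i) = ℓ (v * s i)
        rw [hratio, hus, hvs]
        omega
      · exact Or.inl hratio

lemma good_pibOp (i : B) : Good cs (pibOp cs i) := by
  intro u v h
  have hleL := h
  unfold leL at hleL
  by_cases hdv : cs.IsRightDescent v i
  · have hvs : ℓ (v * s i) + 1 = ℓ v := cs.isRightDescent_iff.mp hdv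
    have h2 : pibOp cs i v = v * s i := by simp [pibOp, hdv]
    by_cases hdu : cs.IsRightDescent u i
    · -- both move down
      have h1 : pibOp cs i u = u * s i := by simp [pibOp, hdu]
      rw [h1, h2]
      have hus : ℓ (u * s i) + 1 = ℓ u := cs.isRightDescent_iff.mp hdu
      have hratio : (v * s i) * (u * s i)⁻¹ = v * u⁻¹ := by
        rw [mul_inv_rev, cs.inv_simple, ← mul_assoc, cs.simple_mul_simple_cancel_right]
      constructor
      · show ℓ ((v * s i) * (u * s i)⁻¹) + ℓ (u * s i) = ℓ (v * s i)
        rw [hratio]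
        omega
      · exact Or.inl hratio
    · -- v moves down, u stays
      have h1 : pibOp cs i u = u := by simp [pibOp, hdu]
      rw [h1, h2]
      have hstar := star cs h hdv hdu
      constructor
      · show ℓ ((v * s i) * u⁻¹) + ℓ u = ℓ (v * s i)
        omega
      · right
        omega
  · -- v stays, hence u stays
    have hdu : ¬ cs.IsRightDescent u i := fun hdu => hdv (descent_mono cs h hdu)
    have h1 : pibOp cs i u = u := by simp [pibOp, hdu]
    have h2 : pibOp cs i v = v := by simp [pibOp, hdv]
    rw [h1, h2]
    exact ⟨h, Or.inl rfl⟩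

lemma good_of_mem {f : Function.End W} (hf : f ∈ biHecke cs) : Good cs f := by
  induction hf using Submonoid.closure_induction with
  | mem f hf =>
    rcases hf with ⟨i, rfl⟩ | ⟨i, rfl⟩
    · exact good_piOp cs i
    · exact good_pibOp cs i
  | one => exact good_one cs
  | mul f g _ _ hf hg => exact good_mul cs hf hg

/-! ### Dynamics: stabilization of iterates of a Good function -/

lemma good_pow {f : Function.End W} (hf : Good cs f) (k : ℕ) : Good cs (f ^ k) := by
  induction k with
  | zero =>
    have h : f ^ 0 = (1 : Function.End W) := pow_zero f
    rw [h]
    exact good_one cs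
  | succ k ih =>
    rw [pow_succ]
    exact good_mul cs ih hf

theorem acyclic_of_good [Finite W] (f : Function.End W) (hf : Good cs f) :
    ∃ k : ℕ, 0 < k ∧ f ^ (k + 1) = f ^ k := by
  have : Fintype W := Fintype.ofFinite W
  set L : ℕ := Finset.univ.sup cs.length with hL
  have hLbound : ∀ w : W, ℓ w ≤ L := fun w => Finset.le_sup (Finset.mem_univ w)
  have hstep1 : ∀ (k : ℕ) (x : W), (f ^ (k + 1)) x = f ((f ^ k) x) := by
    intro k x
    rw [pow_succ']
    rfl
  have hchain : ∀ k : ℕ, leL cs ((f ^ k) (1 : W)) ((f ^ (k + 1)) (1 : W)) := by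
    intro k
    have h0 : leL cs (1 : W) (f (1 : W)) := leL_one cs _
    have h2 := ((good_pow cs hf k) 1 (f 1) h0).1
    have e : (f ^ k) (f (1 : W)) = (f ^ (k + 1)) (1 : W) := by
      rw [pow_succ]
      rfl
    rwa [e] at h2
  have hdich1 : ∀ j : ℕ, f ((f ^ j) (1 : W)) = (f ^ j) (1 : W) ∨ j ≤ ℓ ((f ^ j) (1 : W)) := by
    intro j
    induction j with
    | zero => right; omega
    | succ j ih =>
      rcases ih with h | h
      · left
        rw [hstep1 j, h]
        exact h
      · have hc := hchain j
        by_cases heq : (f ^ (j + 1)) (1 : W) = (f ^ j) (1 : W)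
        · left
          rw [heq, ← hstep1 j, heq]
        · right
          have hlen : ℓ ((f ^ j) (1 : W)) < ℓ ((f ^ (j + 1)) (1 : W)) := by
            unfold leL at hc
            by_cases hr : ℓ ((f ^ (j + 1)) (1 : W) * ((f ^ j) (1 : W))⁻¹) = 0
            · exact absurd (mul_inv_eq_one.mp (cs.length_eq_zero_iff.mp hr)) heq
            · omega
          omega
  have hfix : f ((f ^ (L + 1)) (1 : W)) = (f ^ (L + 1)) (1 : W) := by
    rcases hdich1 (L + 1) with h | h
    · exact h
    · exact absurd h (by have := hLbound ((f ^ (L + 1)) (1 : W)); omega)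
  set K := L + 1 with hK
  set a := (f ^ K) (1 : W) with ha
  have hfixpow : ∀ k : ℕ, (f ^ k) a = a := by
    intro k
    induction k with
    | zero => rfl
    | succ k ih =>
      have e : (f ^ (k + 1)) a = (f ^ k) (f a) := by
        rw [pow_succ]
        rfl
      rw [e, hfix, ih]
  have hbelow : ∀ (k : ℕ) (w : W), leL cs a ((f ^ (K + k)) w) := by
    intro k w
    have h1 : leL cs (1 : W) w := leL_one cs w
    have h2 := ((good_pow cs hf (K + k)) 1 w h1).1
    have h3 : (f ^ (K + k)) (1 : W) = a := by
      have e : f ^ (K + k) = f ^ k * f ^ K := by rw [add_comm, pow_add]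
      calc (f ^ (K + k)) (1 : W) = (f ^ k) ((f ^ K) (1 : W)) := by rw [e]; rfl
        _ = a := hfixpow k
    rwa [h3] at h2
  have hmain : ∀ (w : W) (j : ℕ),
      (f ^ (K + j + 1)) w = (f ^ (K + j)) w ∨
        ℓ ((f ^ (K + j)) w * a⁻¹) + j ≤ ℓ ((f ^ K) w * a⁻¹) := by
    intro w j
    induction j with
    | zero =>
      right
      show ℓ ((f ^ K) w * a⁻¹) + 0 ≤ ℓ ((f ^ K) w * a⁻¹)
      omega
    | succ j ih =>
      have hprop : (f ^ (K + j + 1)) w = (f ^ (K + j)) w →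
          (f ^ (K + (j + 1) + 1)) w = (f ^ (K + (j + 1))) w := by
        intro h
        have e1 : (f ^ (K + (j + 1) + 1)) w = f ((f ^ (K + j + 1)) w) := hstep1 _ w
        have e2 : (f ^ (K + (j + 1))) w = f ((f ^ (K + j)) w) := hstep1 _ w
        rw [e1, e2, h]
      rcases ih with h | h
      · exact Or.inl (hprop h)
      · have hab := hbelow j w
        obtain ⟨h1, h2⟩ := hf a ((f ^ (K + j)) w) hab
        rw [hfix] at h1 h2
        have e1 : f ((f ^ (K + j)) w) = (f ^ (K + j + 1)) w := (hstep1 _ w).symm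
        rw [e1] at h1 h2
        rcases h2 with h2 | h2
        · exact Or.inl (hprop (mul_right_cancel h2))
        · right
          show ℓ ((f ^ (K + j + 1)) w * a⁻¹) + (j + 1) ≤ ℓ ((f ^ K) w * a⁻¹)
          omega
  refine ⟨K + L + 1, by omega, ?_⟩
  funext w
  rcases hmain w (L + 1) with h | h
  · exact h
  · exfalso
    have hb := hbelow 0 w
    rw [add_zero] at hb
    unfold leL at hb
    have hbd := hLbound ((f ^ K) w)
    omega

end BiHeckeAux




/-- The biHecke monoid is acyclic: every element `f` satisfies `f^{k+1} = f^k` for some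
`k > 0`; in particular `f^k` is idempotent. -/
theorem biHecke_acyclic {B W : Type*} [Group W] [Finite W] {M : CoxeterMatrix B}
    (cs : CoxeterSystem M W) (f : Function.End W) (hf : f ∈ biHecke cs) :
    ∃ k : ℕ, 0 < k ∧ f ^ (k + 1) = f ^ k ∧ IsIdempotentElem (f ^ k) := by
  have hgood := BiHeckeAux.good_of_mem cs hf
  obtain ⟨k, hk, hstab⟩ := BiHeckeAux.acyclic_of_good cs f hgood
  refine ⟨k, hk, hstab, ?_⟩
  have hall : ∀ j : ℕ, f ^ (k + j) = f ^ k := by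
    intro j
    induction j with
    | zero => rfl
    | succ j ih =>
      calc f ^ (k + (j + 1)) = f ^ ((k + 1) + j) := by
            rw [show k + (j + 1) = (k + 1) + j from by omega]
        _ = f ^ (k + 1) * f ^ j := pow_add f _ _
        _ = f ^ k * f ^ j := by rw [hstab]
        _ = f ^ (k + j) := (pow_add f k j).symm
        _ = f ^ k := ih
  show f ^ k * f ^ k = f ^ k
  rw [← pow_add]
  exact hall k
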